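/- arXiv:1205.5763 — 4 statements merged into one kernel-verified Lean document; each statement's English description precedes it below -/
import Mathlib

section
/- Let 𝒢 be a finite connected graph with graph distance d, let L ≥ ℓ ≥ 0 be integers and q ∈ (0,1). If a function f : 𝒢 → [0,∞) is (ℓ,q)-subharmonic in a ball B_L(x) with B_L(x) ⊊ 𝒢, then f(x) ≤ q^{⌊(L+1)/(ℓ+1)⌋}·ℳ(f,𝒢), and consequently f(x) ≤ q^{(L−ℓ)/(ℓ+1)}·ℳ(f,𝒢). -/
/-!
Statement 0: decay of (ℓ,q)-subharmonic functions on a finite connected graph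
(Lemma `subh.1` in the paper).
-/

open Finset

section Defs

variable {Gv : Type*} [Fintype Gv]

/-- The ball `B_r(x) = {y : d(x,y) ≤ r}` of the graph metric, as a `Finset`. -/
noncomputable def gball (G : SimpleGraph Gv) (x : Gv) (r : ℕ) : Finset Gv :=
  Finset.univ.filter (fun y => G.dist x y ≤ r)

lemma self_mem_gball (G : SimpleGraph Gv) (x : Gv) (r : ℕ) : x ∈ gball G x r := by
  simp [gball, SimpleGraph.dist_self]

/-- `max_{y ∈ B_r(x)} f(y)`. -/
noncomputable def ballMax (G : SimpleGraph Gv) (f : Gv → ℝ) (x : Gv) (r : ℕ) : ℝ :=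
  (gball G x r).sup' ⟨x, self_mem_gball G x r⟩ f

/-- `f` is `(ℓ,q)`-subharmonic in the ball `B_L(u)`: for every ball `B_ℓ(x) ⊆ B_L(u)`,
`f x ≤ q · max_{y ∈ B_{ℓ+1}(x)} f y`. -/
def IsSubharmonic (G : SimpleGraph Gv) (f : Gv → ℝ) (ℓ : ℕ) (q : ℝ) (u : Gv) (L : ℕ) : Prop :=
  ∀ x : Gv, gball G x ℓ ⊆ gball G u L → f x ≤ q * ballMax G f x (ℓ + 1)

end Defs
theorem statement0 {Gv : Type*} [Fintype Gv] (G : SimpleGraph Gv)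
    (hconn : G.Connected) (ℓ L : ℕ) (hℓL : ℓ ≤ L)
    (q : ℝ) (hq0 : 0 < q) (hq1 : q < 1)
    (f : Gv → ℝ) (hf : ∀ v, 0 ≤ f v)
    (x : Gv) (hproper : gball G x L ≠ Finset.univ)
    (hsub : IsSubharmonic G f ℓ q x L) :
    f x ≤ q ^ ((L + 1) / (ℓ + 1)) * Finset.univ.sup' ⟨x, Finset.mem_univ x⟩ f ∧
      f x ≤ q ^ (((L : ℝ) - (ℓ : ℝ)) / ((ℓ : ℝ) + 1)) *
        Finset.univ.sup' ⟨x, Finset.mem_univ x⟩ f := by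
  set M : ℝ := Finset.univ.sup' ⟨x, Finset.mem_univ x⟩ f with hM
  have hMle : ∀ v, f v ≤ M := fun v => Finset.le_sup' f (Finset.mem_univ v)
  have hM0 : 0 ≤ M := le_trans (hf x) (hMle x)
  -- main iteration
  have key : ∀ i : ℕ, (ℓ + 1) * i ≤ L + 1 →
      ∃ y : Gv, G.dist x y ≤ (ℓ + 1) * i ∧ f x ≤ q ^ i * f y := by
    intro i
    induction i with
    | zero => intro _; exact ⟨x, by simp [SimpleGraph.dist_self], by simp⟩
    | succ i ih =>
      intro hi
      have hi' : (ℓ + 1) * i ≤ L + 1 := le_trans (by nlinarith) hi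
      obtain ⟨y, hdy, hfy⟩ := ih hi'
      have hball : gball G y ℓ ⊆ gball G x L := by
        intro z hz
        simp only [gball, Finset.mem_filter, Finset.mem_univ, true_and] at hz ⊢
        have := hconn.dist_triangle (u := x) (v := y) (w := z)
        have h3 : G.dist x z ≤ (ℓ + 1) * i + ℓ := le_trans this (by omega)
        have h4 : (ℓ + 1) * i + ℓ ≤ L := by nlinarith
        omega
      have hsy := hsub y hball
      obtain ⟨y', hy'mem, hy'eq⟩ :=
        Finset.exists_mem_eq_sup' ⟨y, self_mem_gball G y (ℓ+1)⟩ f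
      have hdyy' : G.dist y y' ≤ ℓ + 1 := by
        simpa [gball] using hy'mem
      refine ⟨y', ?_, ?_⟩
      · have := hconn.dist_triangle (u := x) (v := y) (w := y')
        calc G.dist x y' ≤ G.dist x y + G.dist y y' := this
          _ ≤ (ℓ + 1) * i + (ℓ + 1) := by omega
          _ = (ℓ + 1) * (i + 1) := by ring
      · have h1 : f y ≤ q * f y' := by
          rw [← hy'eq]; exact hsy
        calc f x ≤ q ^ i * f y := hfy
          _ ≤ q ^ i * (q * f y') := by
              apply mul_le_mul_of_nonneg_left h1 (pow_nonneg hq0.le i)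
          _ = q ^ (i + 1) * f y' := by ring
  set k : ℕ := (L + 1) / (ℓ + 1) with hk
  have hk1 : (ℓ + 1) * k ≤ L + 1 := Nat.mul_div_le _ _
  obtain ⟨y, _, hfx⟩ := key k hk1
  have first : f x ≤ q ^ k * M := by
    calc f x ≤ q ^ k * f y := hfx
      _ ≤ q ^ k * M := mul_le_mul_of_nonneg_left (hMle y) (pow_nonneg hq0.le k)
  refine ⟨first, ?_⟩
  have hexp : ((L : ℝ) - ℓ) / ((ℓ : ℝ) + 1) ≤ (k : ℝ) := by
    rw [div_le_iff₀ (by positivity)]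
    have h2 : L + 1 ≤ (ℓ + 1) * k + ℓ + 1 := by
      have e1 : (ℓ + 1) * k + (L + 1) % (ℓ + 1) = L + 1 := Nat.div_add_mod (L + 1) (ℓ + 1)
      have e2 : (L + 1) % (ℓ + 1) < ℓ + 1 := Nat.mod_lt (L + 1) (Nat.succ_pos ℓ)
      omega
    have : (L : ℝ) + 1 ≤ ((ℓ : ℝ) + 1) * k + ℓ + 1 := by exact_mod_cast h2
    linarith
  have hpow : q ^ ((((L : ℝ) - ℓ)) / ((ℓ : ℝ) + 1)) ≥ q ^ (k : ℝ) :=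
    Real.rpow_le_rpow_of_exponent_ge hq0 hq1.le hexp
  have : q ^ (k : ℝ) = q ^ k := Real.rpow_natCast q k
  calc f x ≤ q ^ k * M := first
    _ ≤ q ^ (((L : ℝ) - ℓ) / ((ℓ : ℝ) + 1)) * M := by
        apply mul_le_mul_of_nonneg_right _ hM0
        rw [← this]; exact hpow
end

section
/- Let 𝒢 be a finite connected graph with distance d satisfying |B_r(x)| ≤ C_d·r^d for all x ∈ 𝒢 and r ≥ 1, and such that every vertex has at most C_d neighbours. Let V : 𝒢 → ℝ be a potential, L ≥ ℓ ≥ 1 integers, m > 0, and E ∈ ℝ with E ∉ Σ(H_𝒢). Suppose B_L(u) ⊊ 𝒢 and every ball B_ℓ(x) ⊆ B_L(u) is (E,m)-nonsingular. Then for every y ∈ 𝒢 ∖ B_L(u), the function x ↦ |G_𝒢(x,y;E)| is (ℓ,q)-subharmonic in B_L(u) with q = exp(−γ(m,ℓ)·ℓ). -/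
/-!
Statement 1: the Green function of a finite-volume discrete Schrödinger operator is
`(ℓ,q)`-subharmonic on a ball all of whose `ℓ`-sub-balls are `(E,m)`-nonsingular
(Lemma `GF.is.SH.1` in the paper).
-/

open Finset

section Defs

variable {Gv : Type*} [Fintype Gv]

/-- The discrete Schrödinger operator `H_Λ = -Δ^D_Λ + V` (Dirichlet restriction to `Λ`,
with `n(x)` the number of neighbours of `x` in the whole graph), as a matrix. -/
noncomputable def Ham [DecidableEq Gv] (G : SimpleGraph Gv) [DecidableRel G.Adj]
    (V : Gv → ℝ) (Λ : Finset Gv) : Matrix Λ Λ ℝ := fun x y =>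
  (if (x : Gv) = (y : Gv) then (G.degree (x : Gv) : ℝ) + V (x : Gv) else 0) -
    (if G.Adj (x : Gv) (y : Gv) then 1 else 0)

/-- The spectrum (set of eigenvalues) of a finite-dimensional operator. -/
noncomputable def specSet {n : Type*} [Fintype n] [DecidableEq n] (H : Matrix n n ℝ) :
    Set ℝ := {E : ℝ | (H - E • (1 : Matrix n n ℝ)).det = 0}

/-- The Green function `G(x,y;E) = ⟨δ_x, (H-E)⁻¹ δ_y⟩`. -/
noncomputable def green {n : Type*} [Fintype n] [DecidableEq n] (H : Matrix n n ℝ)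
    (E : ℝ) : Matrix n n ℝ := (H - E • (1 : Matrix n n ℝ))⁻¹

/-- `γ(m,L) = m(1 + L^{-τ})`. -/
noncomputable def gam (m τ : ℝ) (L : ℕ) : ℝ := m * (1 + (L : ℝ) ^ (-τ))

/-- The ball `B_L(u)` is `(E,m)`-nonsingular: `E` is away from the spectrum of `H_{B_L(u)}`
and `C_d² L^d |G_{B_L(u)}(x,y;E)| ≤ exp(-γ(m,L) d(x,y))` whenever `d(x,y) ≥ L^{(1+ϱ)/α}`. -/
noncomputable def IsNS [DecidableEq Gv] (G : SimpleGraph Gv) [DecidableRel G.Adj]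
    (V : Gv → ℝ) (Cd : ℝ) (d : ℕ) (α τ ϱ : ℝ) (u : Gv) (L : ℕ) (E m : ℝ) : Prop :=
  E ∉ specSet (Ham G V (gball G u L)) ∧
  ∀ x y : (gball G u L), ((L : ℝ) ^ ((1 + ϱ) / α) ≤ (G.dist (x : Gv) (y : Gv) : ℝ)) →
    Cd ^ 2 * (L : ℝ) ^ d * |green (Ham G V (gball G u L)) E x y| ≤
      Real.exp (-(gam m τ L) * (G.dist (x : Gv) (y : Gv) : ℝ))

end Defs

theorem statement1 {Gv : Type*} [Fintype Gv] [DecidableEq Gv]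
    (G : SimpleGraph Gv) [DecidableRel G.Adj] (hconn : G.Connected)
    (Cd : ℝ) (d : ℕ) (hCd : 1 ≤ Cd) (hd : 1 ≤ d)
    (hball : ∀ (x : Gv) (r : ℕ), 1 ≤ r → ((gball G x r).card : ℝ) ≤ Cd * (r : ℝ) ^ d)
    (hdeg : ∀ v : Gv, (G.degree v : ℝ) ≤ Cd)
    (V : Gv → ℝ) (ℓ L : ℕ) (h1ℓ : 1 ≤ ℓ) (hℓL : ℓ ≤ L) (m : ℝ) (hm : 0 < m)
    (E : ℝ) (hE : E ∉ specSet (Ham G V Finset.univ))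
    (u : Gv) (hproper : gball G u L ≠ Finset.univ)
    (hNS : ∀ x : Gv, gball G x ℓ ⊆ gball G u L →
      IsNS G V Cd d (3/2) (1/8) (1/6) x ℓ E m)
    (y : Gv) (hy : y ∉ gball G u L) :
    IsSubharmonic G
      (fun x => |green (Ham G V Finset.univ) E ⟨x, Finset.mem_univ x⟩ ⟨y, Finset.mem_univ y⟩|)
      ℓ (Real.exp (-(gam m (1/8) ℓ) * (ℓ : ℝ))) u L := by
  classical
  intro x hx
  obtain ⟨hEB, hGreen⟩ := hNS x hx
  set B : Finset Gv := gball G x ℓ with hB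
  set q : ℝ := Real.exp (-gam m (1/8) ℓ * (ℓ : ℝ)) with hq
  set Au : Matrix (Finset.univ : Finset Gv) (Finset.univ : Finset Gv) ℝ :=
    Ham G V Finset.univ - E • 1 with hAu
  set AB : Matrix B B ℝ := Ham G V B - E • 1 with hABdef
  set M : Matrix (Finset.univ : Finset Gv) (Finset.univ : Finset Gv) ℝ := Au⁻¹ with hM
  set N : Matrix B B ℝ := AB⁻¹ with hN
  have hgreenU : green (Ham G V (Finset.univ : Finset Gv)) E = M := rfl
  have hgreenB : green (Ham G V B) E = N := rfl
  set emb : Gv → ((Finset.univ : Finset Gv) : Type _) := fun z => ⟨z, Finset.mem_univ z⟩ with hemb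
  -- the function in question
  set f : Gv → ℝ := fun z => |green (Ham G V Finset.univ) E ⟨z, Finset.mem_univ z⟩ ⟨y, Finset.mem_univ y⟩| with hf
  set Mx : ℝ := ballMax G f x (ℓ + 1) with hMx
  -- basic positivity
  have hl0 : (0:ℝ) < (ℓ:ℝ) := by exact_mod_cast h1ℓ
  have hl1 : (1:ℝ) ≤ (ℓ:ℝ) := by exact_mod_cast h1ℓ
  have hCd0 : (0:ℝ) < Cd := lt_of_lt_of_le one_pos hCd
  have hC : (0:ℝ) < Cd ^ 2 * (ℓ:ℝ) ^ d := by positivity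
  have hq0 : (0:ℝ) < q := Real.exp_pos _
  have hMx0 : 0 ≤ Mx := by
    have h1 : f x ≤ Mx := Finset.le_sup' f (self_mem_gball G x (ℓ+1))
    have h2 : 0 ≤ f x := abs_nonneg _
    linarith
  have hqC : 0 ≤ q / (Cd ^ 2 * (ℓ:ℝ) ^ d) := le_of_lt (div_pos hq0 hC)
  have hMxw : ∀ w : Gv, G.dist x w ≤ ℓ + 1 → f w ≤ Mx := by
    intro w hw
    exact Finset.le_sup' f (by simp [gball, hw])
  -- invertibility
  have hAuDet : IsUnit Au.det := isUnit_iff_ne_zero.mpr hE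
  have hABDet : IsUnit AB.det := isUnit_iff_ne_zero.mpr hEB
  -- membership facts
  have hmemB : ∀ z : Gv, z ∈ B ↔ G.dist x z ≤ ℓ := by
    intro z; simp [hB, gball]
  have hyB : y ∉ B := fun hmem => hy (hx (by rwa [hB] at hmem))
  -- key vectors
  set g : B → ℝ := fun z => M (emb z) (emb y) with hg
  set t : Gv → Gv → ℝ :=
    fun z w => if G.Adj z w ∧ w ∉ B then M (emb w) (emb y) else 0 with ht
  set h : B → ℝ := fun z => ∑ w : Gv, t z w with hh
  -- entries of AB agree with entries of Au
  have entry : ∀ z w : B, AB z w = Au (emb z) (emb w) := by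
    intro z w
    by_cases hzw : (z:Gv) = (w:Gv)
    · have e1 : z = w := Subtype.ext hzw
      subst e1
      simp [hABdef, hAu, Ham, Matrix.one_apply]
      rfl
    · have e1 : z ≠ w := fun hc => hzw (congrArg Subtype.val hc)
      have e2 : emb (z:Gv) ≠ emb (w:Gv) := fun hc => hzw (congrArg
        (Subtype.val : {a // a ∈ (Finset.univ : Finset Gv)} → Gv) hc)
      simp [hABdef, hAu, Ham, Matrix.one_apply, e1, e2, hzw]
      rfl
  -- total row sum is zero
  have total : ∀ z : B, ∑ w : Gv, Au (emb z) (emb w) * M (emb w) (emb y) = 0 := by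
    intro z
    have e1 : ∑ w : Gv, Au (emb z) (emb w) * M (emb w) (emb y)
        = ∑ w : ((Finset.univ : Finset Gv) : Type _), Au (emb z) w * M w (emb y) := by
      refine Fintype.sum_equiv (Equiv.subtypeUnivEquiv (fun a => Finset.mem_univ a)).symm _ _ ?_
      intro w; rfl
    rw [e1, ← Matrix.mul_apply, Matrix.mul_nonsing_inv Au hAuDet]
    refine Matrix.one_apply_ne ?_
    intro hcon
    have hzy' : (z : Gv) = y := congrArg Subtype.val hcon
    exact hyB (hzy' ▸ z.2)
  -- the sum over the complement of B
  have compl : ∀ z : B, ∑ w ∈ Bᶜ, Au (emb z) (emb w) * M (emb w) (emb y) = - h z := by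
    intro z
    have hsplit : ∑ w ∈ B, t (z:Gv) w + ∑ w ∈ Bᶜ, t (z:Gv) w = ∑ w : Gv, t (z:Gv) w :=
      Finset.sum_add_sum_compl B _
    have hzero : ∑ w ∈ B, t (z:Gv) w = 0 := by
      refine Finset.sum_eq_zero ?_
      intro w hw
      simp [ht, hw]
    have hcompl : ∑ w ∈ Bᶜ, Au (emb z) (emb w) * M (emb w) (emb y)
        = ∑ w ∈ Bᶜ, -(t (z:Gv) w) := by
      refine Finset.sum_congr rfl ?_
      intro w hw
      rw [Finset.mem_compl] at hw
      have hne : (z : Gv) ≠ w := fun hcon => hw (hcon ▸ z.2)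
      have hne' : (emb (z:Gv)) ≠ emb w := fun hcon => hne (congrArg Subtype.val hcon)
      simp only [hAu, Matrix.sub_apply, Matrix.smul_apply, Ham, smul_eq_mul,
        Matrix.one_apply, hemb]
      by_cases hadj : G.Adj (z:Gv) w
      · simp [ht, hne, hne', hadj, hw, hemb, Matrix.one_apply]
      · simp [ht, hne, hne', hadj, hw, hemb, Matrix.one_apply]
    rw [hcompl, Finset.sum_neg_distrib]
    have : ∑ w ∈ Bᶜ, t (z:Gv) w = h z := by
      rw [hh]
      have := hsplit
      rw [hzero] at this
      linarith [this]
    rw [this]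
  -- resolvent identity : AB *ᵥ g = h
  have step1 : AB.mulVec g = h := by
    funext z
    have e0 : AB.mulVec g z = ∑ w : B, AB z w * g w := by
      simp [Matrix.mulVec, dotProduct]
    have e1 : ∑ w : B, AB z w * g w
        = ∑ w ∈ B, Au (emb z) (emb w) * M (emb w) (emb y) := by
      rw [← Finset.sum_coe_sort B (fun w => Au (emb z) (emb w) * M (emb w) (emb y))]
      exact Finset.sum_congr rfl (fun w _ => by rw [entry z w])
    have e2 := Finset.sum_add_sum_compl B (fun w => Au (emb z) (emb w) * M (emb w) (emb y))
    have e3 := total z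
    have e4 := compl z
    rw [e0, e1]
    linarith [e2, e3, e4]
  -- g = N *ᵥ h
  have step2 : g = N.mulVec h := by
    have h1 : N.mulVec (AB.mulVec g) = g := by
      rw [Matrix.mulVec_mulVec, Matrix.nonsing_inv_mul AB hABDet, Matrix.one_mulVec]
    rw [step1] at h1
    exact h1.symm
  -- distance facts
  have hdist : ∀ (z : B) (w : Gv), G.Adj (z:Gv) w → w ∉ B →
      G.dist x (z:Gv) = ℓ ∧ G.dist x w ≤ ℓ + 1 := by
    intro z w hadj hw
    have h1 : G.dist x (z:Gv) ≤ ℓ := (hmemB _).mp z.2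
    have h2 : ℓ < G.dist x w := by
      by_contra hcon
      exact hw ((hmemB w).mpr (by omega))
    have h3 : G.dist x w ≤ G.dist x (z:Gv) + 1 := by
      have := hconn.dist_triangle (u := x) (v := (z:Gv)) (w := w)
      rwa [SimpleGraph.dist_eq_one_iff_adj.mpr hadj] at this
    omega
  -- the nonsingularity bound
  set xB : B := ⟨x, self_mem_gball G x ℓ⟩ with hxB
  have hNSbd : ∀ z : B, G.dist x (z:Gv) = ℓ →
      |N xB z| ≤ q / (Cd ^ 2 * (ℓ:ℝ) ^ d) := by
    intro z hz
    have hpre : (ℓ:ℝ) ^ ((1 + 1/6)/(3/2) : ℝ) ≤ (G.dist (xB:Gv) (z:Gv) : ℝ) := by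
      have : (ℓ:ℝ) ^ ((1 + 1/6)/(3/2) : ℝ) ≤ (ℓ:ℝ) ^ (1:ℝ) :=
        Real.rpow_le_rpow_of_exponent_le hl1 (by norm_num)
      rw [Real.rpow_one] at this
      have hx' : (xB : Gv) = x := rfl
      rw [hx', hz]
      exact this
    have hkey := hGreen xB z hpre
    rw [hgreenB] at hkey
    have hx' : (xB : Gv) = x := rfl
    rw [hx', hz] at hkey
    rw [le_div_iff₀ hC]
    calc |N xB z| * (Cd ^ 2 * (ℓ:ℝ) ^ d)
        = Cd ^ 2 * (ℓ:ℝ) ^ d * |N xB z| := by ring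
      _ ≤ q := hkey
  -- main estimate
  show f x ≤ q * Mx
  have hfx : f x = |g xB| := rfl
  rw [hfx, step2]
  have e0 : N.mulVec h xB = ∑ z : B, N xB z * h z := by
    simp [Matrix.mulVec, dotProduct]
  rw [e0]
  calc |∑ z : B, N xB z * h z|
      ≤ ∑ z : B, |N xB z * h z| := Finset.abs_sum_le_sum_abs _ _
    _ ≤ ∑ z : B, ∑ w : Gv,
        (if G.Adj (z:Gv) w then q / (Cd ^ 2 * (ℓ:ℝ) ^ d) * Mx else 0) := by
        refine Finset.sum_le_sum ?_
        intro z _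
        have e1 : |N xB z * h z| ≤ ∑ w : Gv, |N xB z| * |t (z:Gv) w| := by
          rw [abs_mul, hh]
          calc |N xB z| * |∑ w : Gv, t (z:Gv) w|
              ≤ |N xB z| * ∑ w : Gv, |t (z:Gv) w| :=
                mul_le_mul_of_nonneg_left (Finset.abs_sum_le_sum_abs _ _) (abs_nonneg _)
            _ = ∑ w : Gv, |N xB z| * |t (z:Gv) w| := Finset.mul_sum _ _ _
        refine le_trans e1 (Finset.sum_le_sum ?_)
        intro w _
        by_cases hcond : G.Adj (z:Gv) w ∧ w ∉ B
        · obtain ⟨hadj, hw⟩ := hcond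
          obtain ⟨hdz, hdw⟩ := hdist z w hadj hw
          have hN := hNSbd z hdz
          have htw : |t (z:Gv) w| = f w := by
            rw [ht]; simp only [hadj, hw, not_false_iff, and_self, if_true]
            rw [hf, hgreenU]
          rw [htw, if_pos hadj]
          exact mul_le_mul hN (hMxw w hdw) (abs_nonneg _) hqC
        · have htw : t (z:Gv) w = 0 := by rw [ht]; simp [hcond]
          rw [htw, abs_zero, mul_zero]
          by_cases hadj : G.Adj (z:Gv) w
          · rw [if_pos hadj]; exact mul_nonneg hqC hMx0
          · rw [if_neg hadj]
    _ = ∑ z : B, q / (Cd ^ 2 * (ℓ:ℝ) ^ d) * Mx * (G.degree (z:Gv) : ℝ) := by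
        refine Finset.sum_congr rfl ?_
        intro z _
        rw [← Finset.sum_filter]
        rw [Finset.sum_const]
        have hcard : (Finset.univ.filter (fun w => G.Adj (z:Gv) w)).card
            = G.degree (z:Gv) := by
          rw [SimpleGraph.degree]
          congr 1
          ext w
          simp [SimpleGraph.mem_neighborFinset]
        rw [hcard, nsmul_eq_mul, mul_comm]
    _ ≤ ∑ z : B, q / (Cd ^ 2 * (ℓ:ℝ) ^ d) * Mx * Cd := by
        refine Finset.sum_le_sum ?_
        intro z _
        exact mul_le_mul_of_nonneg_left (hdeg _) (mul_nonneg hqC hMx0)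
    _ = (B.card : ℝ) * (q / (Cd ^ 2 * (ℓ:ℝ) ^ d) * Mx * Cd) := by
        rw [Finset.sum_const, Finset.card_univ, Fintype.card_coe, nsmul_eq_mul]
    _ ≤ (Cd * (ℓ:ℝ) ^ d) * (q / (Cd ^ 2 * (ℓ:ℝ) ^ d) * Mx * Cd) := by
        refine mul_le_mul_of_nonneg_right ?_ ?_
        · have := hball x ℓ h1ℓ
          rwa [← hB] at this
        · exact mul_nonneg (mul_nonneg hqC hMx0) (le_of_lt hCd0)
    _ = q * Mx := by
        have h1 : Cd ≠ 0 := ne_of_gt hCd0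
        have h2 : (ℓ:ℝ) ^ d ≠ 0 := by positivity
        field_simp
end

section
/- Let d ≥ 1, C_d ≥ 1, α ∈ (1,2) and κ > 2αd/(2−α), and set θ := 2/α − 2d/κ − 1, so that θ > 0. Let L_0 ≥ 2 and L_{k+1} = L_k^α (real scales), and let (P_k)_{k≥0} be a sequence of nonnegative reals satisfying P_{k+1} ≤ C_d²·L_{k+1}^{2d}·P_k² for all k ≥ k₀. If P_{k₀} ≤ C_d^{−2}·L_{k₀}^{−κ(1+θ)^{k₀}} for some k₀ ≥ 0, then P_k ≤ C_d^{−2}·L_k^{−κ(1+θ)^{k}} for all k ≥ k₀; in particular P_k decays faster than any power of L_k. -/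
/-!
Statement 5: the quantitative scale-induction recursion with growing exponents
(the "bonus" recursion in Section 5 of the paper).
-/

theorem statement5 (d Cd : ℝ) (hd : 1 ≤ d) (hCd : 1 ≤ Cd)
    (α : ℝ) (hα1 : 1 < α) (hα2 : α < 2)
    (κ : ℝ) (hκ : 2 * α * d / (2 - α) < κ)
    (θ : ℝ) (hθ : θ = 2 / α - 2 * d / κ - 1)
    (L : ℕ → ℝ) (hL0 : 2 ≤ L 0) (hLrec : ∀ k : ℕ, L (k + 1) = L k ^ α)
    (P : ℕ → ℝ) (hP : ∀ k, 0 ≤ P k) (k₀ : ℕ)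
    (hrec : ∀ k : ℕ, k₀ ≤ k → P (k + 1) ≤ Cd ^ 2 * L (k + 1) ^ (2 * d) * P k ^ 2)
    (hinit : P k₀ ≤ (Cd ^ 2)⁻¹ * L k₀ ^ (-(κ * (1 + θ) ^ k₀))) :
    0 < θ ∧ ∀ k : ℕ, k₀ ≤ k → P k ≤ (Cd ^ 2)⁻¹ * L k ^ (-(κ * (1 + θ) ^ k)) := by
  have hα0 : (0:ℝ) < α := lt_trans one_pos hα1
  have h2α : (0:ℝ) < 2 - α := by linarith
  have hd0 : (0:ℝ) < d := by linarith
  have hκ0 : (0:ℝ) < κ := lt_trans (by positivity) hκ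
  have hCd0 : (0:ℝ) < Cd := lt_of_lt_of_le one_pos hCd
  have hκ' : 2 * α * d < κ * (2 - α) := (div_lt_iff₀ h2α).mp hκ
  have hθ0 : 0 < θ := by
    rw [hθ]
    have h1 : 2 * d / κ < (2 - α) / α := by
      rw [div_lt_div_iff₀ hκ0 hα0]; nlinarith
    have h2 : (2 - α) / α = 2 / α - 1 := by
      rw [sub_div, div_self (ne_of_gt hα0)]
    linarith
  have hL : ∀ k, 2 ≤ L k := by
    intro k; induction k with
    | zero => exact hL0
    | succ n ih =>
      rw [hLrec]
      calc (2:ℝ) ≤ L n := ih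
      _ = L n ^ (1:ℝ) := (Real.rpow_one _).symm
      _ ≤ L n ^ α := Real.rpow_le_rpow_of_exponent_le (by linarith) hα1.le
  have hL1 : ∀ k, 1 ≤ L k := fun k => le_trans one_le_two (hL k)
  have hLpos : ∀ k, 0 < L k := fun k => lt_of_lt_of_le two_pos (hL k)
  have key : κ * (α * (1 + θ)) = 2 * κ - 2 * d * α := by
    rw [hθ]; field_simp; ring
  refine ⟨hθ0, ?_⟩
  intro k hk
  induction k, hk using Nat.le_induction with
  | base => exact hinit
  | succ n hn ih =>
    set t := (1 + θ) ^ n with ht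
    have ht1 : (1:ℝ) ≤ t := one_le_pow₀ (by linarith)
    have e1 : L (n + 1) ^ (2 * d) = L n ^ (α * (2 * d)) := by
      rw [hLrec, ← Real.rpow_mul (hLpos n).le]
    have e2 : (L n ^ (-(κ * t))) ^ 2 = L n ^ (-(κ * t) * 2) := by
      rw [← Real.rpow_natCast (L n ^ (-(κ * t))) 2, ← Real.rpow_mul (hLpos n).le]
      norm_num
    calc P (n + 1) ≤ Cd ^ 2 * L (n + 1) ^ (2 * d) * P n ^ 2 := hrec n hn
    _ ≤ Cd ^ 2 * L (n + 1) ^ (2 * d) * ((Cd ^ 2)⁻¹ * L n ^ (-(κ * t))) ^ 2 := by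
        exact mul_le_mul_of_nonneg_left (pow_le_pow_left₀ (hP n) ih 2)
          (mul_nonneg (by positivity) (Real.rpow_nonneg (hLpos _).le _))
    _ = Cd ^ 2 * ((Cd ^ 2)⁻¹) ^ 2 * (L n ^ (α * (2 * d)) * L n ^ (-(κ * t) * 2)) := by
        rw [mul_pow, e1, e2]; ring
    _ = (Cd ^ 2)⁻¹ * L n ^ (α * (2 * d) + -(κ * t) * 2) := by
        rw [← Real.rpow_add (hLpos n)]
        congr 1
        field_simp
    _ ≤ (Cd ^ 2)⁻¹ * L n ^ (α * (-(κ * (1 + θ) ^ (n + 1)))) := by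
        apply mul_le_mul_of_nonneg_left _ (by positivity)
        apply Real.rpow_le_rpow_of_exponent_le (hL1 n)
        have hpow : (1 + θ) ^ (n + 1) = (1 + θ) * t := by rw [pow_succ]; ring
        rw [hpow]
        have hprod : 0 ≤ (t - 1) * (2 * d * α) :=
          mul_nonneg (by linarith) (by positivity)
        have key' : κ * (α * (1 + θ)) * t = (2 * κ - 2 * d * α) * t := by rw [key]
        nlinarith [key', hprod]
    _ = (Cd ^ 2)⁻¹ * L (n + 1) ^ (-(κ * (1 + θ) ^ (n + 1))) := by
        rw [hLrec, ← Real.rpow_mul (hLpos n).le]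
end

section
/- Let 𝒢 be a finite connected graph with distance d, let ℓ ≥ 0 be an integer, q ∈ (0,1), B_L(u) ⊊ 𝒢 a ball with L ≥ ℓ, and 𝓡 ⊆ B_L(u). Let f : 𝒢 → [0,∞) be (ℓ,q,𝓡)-subharmonic in B_L(u). Suppose the complement B_L(u) ∖ 𝓡 is covered by annuli A_i = B_{b_i}(u) ∖ B_{a_i}(u), i = 1,…,n, with widths b_i − a_i ≤ c_i·ℓ for positive integers c_i, where C := Σ_{i=1}^{n} c_i satisfies 2C(ℓ+1) < L. Then f(u) ≤ q^{⌊(L+1)/(ℓ+1)⌋ − 2C}·ℳ(f,𝒢). -/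
/-!
Statement 13: radial descent bound for `(ℓ,q,𝓡)`-subharmonic functions whose singular set
is covered by annuli (Lemma `RDB.annuli` in the paper).
-/

open Finset

section Defs

variable {Gv : Type*} [Fintype Gv]

/-- The sphere `S_r(u) = {y : d(u,y) = r}`. -/
noncomputable def gsphere (G : SimpleGraph Gv) (u : Gv) (r : ℕ) : Finset Gv :=
  Finset.univ.filter (fun y => G.dist u y = r)

/-- `f` is `(ℓ,q,𝓡)`-subharmonic in `B_L(u)`:
(i) every `x ∈ 𝓡` satisfies `f x ≤ q · max_{B_{ℓ+1}(x)} f`;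
(ii) for every `x ∈ B_L(u)` and every `r` with `max(d(u,x), ℓ+1) ≤ r ≤ L-ℓ` and
`S_r(u) ⊆ 𝓡`, one has `f x ≤ q · max_{B_{r+ℓ+1}(u)} f`. -/
def IsSubharmonicR (G : SimpleGraph Gv) (f : Gv → ℝ) (ℓ : ℕ) (q : ℝ)
    (R : Set Gv) (u : Gv) (L : ℕ) : Prop :=
  (∀ x ∈ R, f x ≤ q * ballMax G f x (ℓ + 1)) ∧
  (∀ x ∈ gball G u L, ∀ r : ℕ, max (G.dist u x) (ℓ + 1) ≤ r → r ≤ L - ℓ →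
    (↑(gsphere G u r) : Set Gv) ⊆ R → f x ≤ q * ballMax G f u (r + ℓ + 1))

end Defs

theorem statement13 {Gv : Type*} [Fintype Gv] (G : SimpleGraph Gv) (hconn : G.Connected)
    (ℓ L : ℕ) (hℓL : ℓ ≤ L) (q : ℝ) (hq0 : 0 < q) (hq1 : q < 1)
    (u : Gv) (hproper : gball G u L ≠ Finset.univ)
    (R : Set Gv) (hR : R ⊆ ↑(gball G u L))
    (f : Gv → ℝ) (hf : ∀ v, 0 ≤ f v)
    (hsub : IsSubharmonicR G f ℓ q R u L)
    (n : ℕ) (aa bb cc : Fin n → ℕ) (hcc : ∀ i, 0 < cc i)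
    (hwidth : ∀ i, bb i - aa i ≤ cc i * ℓ)
    (C : ℕ) (hC : C = ∑ i, cc i) (hCL : 2 * C * (ℓ + 1) < L)
    (hcover : (↑(gball G u L) : Set Gv) \ R ⊆
      ⋃ i, ((↑(gball G u (bb i)) : Set Gv) \ ↑(gball G u (aa i)))) :
    f u ≤ q ^ ((L + 1) / (ℓ + 1) - 2 * C) * Finset.univ.sup' ⟨u, Finset.mem_univ u⟩ f := by
    classical
  set T : ℕ := (L + 1) / (ℓ + 1) with hT
  set Msup : ℝ := Finset.univ.sup' ⟨u, Finset.mem_univ u⟩ f with hMsup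
  have hMsup0 : 0 ≤ Msup := le_trans (hf u) (Finset.le_sup' f (Finset.mem_univ u))
  -- basic facts about balls
  have hball_mono : ∀ {s t : ℕ}, s ≤ t → gball G u s ⊆ gball G u t := by
    intro s t hst
    intro x hx
    simp only [gball, Finset.mem_filter, Finset.mem_univ, true_and] at hx ⊢
    omega
  have hM_mono : ∀ {s t : ℕ}, s ≤ t → ballMax G f u s ≤ ballMax G f u t := by
    intro s t hst
    apply Finset.sup'_le
    intro x hx
    exact Finset.le_sup' f (hball_mono hst hx)
  have hM_le : ∀ s : ℕ, ballMax G f u s ≤ Msup := by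
    intro s
    apply Finset.sup'_le
    intro x _
    exact Finset.le_sup' f (Finset.mem_univ x)
  have hfu_le : ∀ s : ℕ, f u ≤ ballMax G f u s := by
    intro s
    exact Finset.le_sup' f (self_mem_gball G u s)
  have hTmul : T * (ℓ + 1) ≤ L + 1 := Nat.div_mul_le_self _ _
  have hjle : ∀ j : ℕ, j < T → j * (ℓ + 1) ≤ L - ℓ ∧ j * (ℓ + 1) ≤ L := by
    intro j hj
    have h1 : (j + 1) * (ℓ + 1) ≤ L + 1 :=
      le_trans (Nat.mul_le_mul_right _ (by omega)) hTmul
    rw [add_mul, one_mul] at h1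
    generalize j * (ℓ + 1) = p at h1 ⊢
    omega
  have hT1 : 1 ≤ T := (Nat.one_le_div_iff (by omega)).2 (by omega)
  -- u ∈ R
  have huR : u ∈ R := by
    by_contra huR
    have hu : u ∈ (↑(gball G u L) : Set Gv) \ R := ⟨self_mem_gball G u L, huR⟩
    obtain ⟨s, ⟨i, rfl⟩, hus⟩ := hcover hu
    exact hus.2 (self_mem_gball G u (aa i))
  -- goodness of a step j
  set good : ℕ → Prop := fun j => (↑(gsphere G u (j * (ℓ + 1))) : Set Gv) ⊆ R with hgood
  -- the key descent step
  have hstep : ∀ j : ℕ, 1 ≤ j → j < T → good j →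
      ballMax G f u (j * (ℓ + 1)) ≤ q * ballMax G f u ((j + 1) * (ℓ + 1)) := by
    intro j hj1 hjT hgj
    have hrL : j * (ℓ + 1) ≤ L - ℓ := (hjle j hjT).1
    apply Finset.sup'_le
    intro x hx
    have hdx : G.dist u x ≤ j * (ℓ + 1) := by
      simpa [gball] using hx
    have hxL : x ∈ gball G u L := by
      simp only [gball, Finset.mem_filter, Finset.mem_univ, true_and]
      exact hdx.trans (hjle j hjT).2
    have h := hsub.2 x hxL (j * (ℓ + 1))
      (max_le hdx (Nat.le_mul_of_pos_left _ (by omega))) hrL hgj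
    calc f x ≤ q * ballMax G f u (j * (ℓ + 1) + ℓ + 1) := h
      _ = q * ballMax G f u ((j + 1) * (ℓ + 1)) := by ring_nf
  -- the descent chain
  have key : ∀ m : ℕ, ∀ j : ℕ, j + m = T → 1 ≤ j →
      ballMax G f u (j * (ℓ + 1)) ≤
        q ^ ((Finset.Ico j T).filter good).card * Msup := by
    intro m
    induction m with
    | zero =>
      intro j hjm _
      have : j = T := by omega
      subst this
      simp [hM_le]
    | succ m ih =>
      intro j hjm hj1
      have hjT : j < T := by omega
      have hIco : Finset.Ico j T = insert j (Finset.Ico (j + 1) T) := by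
        exact (Finset.insert_Ico_add_one_left_eq_Ico hjT).symm
      have hjnot : j ∉ Finset.Ico (j + 1) T := by simp
      have ihj := ih (j + 1) (by omega) (by omega)
      by_cases hgj : good j
      · have hcard : ((Finset.Ico j T).filter good).card =
            ((Finset.Ico (j + 1) T).filter good).card + 1 := by
          rw [hIco, Finset.filter_insert, if_pos hgj,
            Finset.card_insert_of_notMem (fun h => hjnot (Finset.mem_of_mem_filter _ h))]
        calc ballMax G f u (j * (ℓ + 1))
            ≤ q * ballMax G f u ((j + 1) * (ℓ + 1)) := hstep j hj1 hjT hgj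
          _ ≤ q * (q ^ ((Finset.Ico (j + 1) T).filter good).card * Msup) :=
              mul_le_mul_of_nonneg_left ihj hq0.le
          _ = q ^ ((Finset.Ico j T).filter good).card * Msup := by
              rw [hcard]; ring
      · have hcard : ((Finset.Ico j T).filter good).card =
            ((Finset.Ico (j + 1) T).filter good).card := by
          rw [hIco, Finset.filter_insert, if_neg hgj]
        calc ballMax G f u (j * (ℓ + 1))
            ≤ ballMax G f u ((j + 1) * (ℓ + 1)) :=
              hM_mono (Nat.mul_le_mul_right _ (by omega))
          _ ≤ q ^ ((Finset.Ico (j + 1) T).filter good).card * Msup := ihj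
          _ = q ^ ((Finset.Ico j T).filter good).card * Msup := by rw [hcard]
  -- counting bad steps
  have hbad : ((Finset.Ico 1 T).filter (fun j => ¬ good j)).card ≤ C := by
    have hsubbad : (Finset.Ico 1 T).filter (fun j => ¬ good j) ⊆
        Finset.univ.biUnion (fun i : Fin n =>
          Finset.Ioc (aa i / (ℓ + 1)) (bb i / (ℓ + 1))) := by
      intro j hj
      simp only [Finset.mem_filter, Finset.mem_Ico] at hj
      obtain ⟨⟨hj1, hjT⟩, hng⟩ := hj
      rw [hgood] at hng
      simp only [Set.not_subset] at hng
      obtain ⟨y, hy, hyR⟩ := hng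
      have hyd : G.dist u y = j * (ℓ + 1) := by
        simpa [gsphere] using hy
      have hyL : y ∈ (↑(gball G u L) : Set Gv) := by
        simp only [gball, Finset.coe_filter, Set.mem_setOf_eq, Finset.mem_univ, true_and]
        rw [hyd]
        exact (hjle j hjT).2
      obtain ⟨s, ⟨i, rfl⟩, hys⟩ := hcover ⟨hyL, hyR⟩
      have hyb : G.dist u y ≤ bb i := by
        have := hys.1
        simpa [gball] using this
      have hya : aa i < G.dist u y := by
        have := hys.2
        simp only [gball, Finset.coe_filter, Set.mem_setOf_eq, Finset.mem_univ,
          true_and, not_le] at this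
        exact this
      rw [hyd] at hyb hya
      refine Finset.mem_biUnion.2 ⟨i, Finset.mem_univ i, Finset.mem_Ioc.2 ⟨?_, ?_⟩⟩
      · by_contra h
        push_neg at h
        have h1 : j * (ℓ + 1) ≤ aa i :=
          le_trans (Nat.mul_le_mul_right _ h) (Nat.div_mul_le_self _ _)
        exact absurd hya (not_lt.2 h1)
      · exact Nat.le_div_iff_mul_le (by omega) |>.2 hyb
    calc ((Finset.Ico 1 T).filter (fun j => ¬ good j)).card
        ≤ (Finset.univ.biUnion (fun i : Fin n =>
            Finset.Ioc (aa i / (ℓ + 1)) (bb i / (ℓ + 1)))).card :=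
          Finset.card_le_card hsubbad
      _ ≤ ∑ i : Fin n, (Finset.Ioc (aa i / (ℓ + 1)) (bb i / (ℓ + 1))).card :=
          Finset.card_biUnion_le
      _ ≤ ∑ i : Fin n, cc i := by
          apply Finset.sum_le_sum
          intro i _
          rw [Nat.card_Ioc]
          have hb : bb i ≤ cc i * ℓ + aa i := tsub_le_iff_right.1 (hwidth i)
          have h2 : bb i / (ℓ + 1) ≤ (aa i + cc i * (ℓ + 1)) / (ℓ + 1) := by
            apply Nat.div_le_div_right
            nlinarith
          rw [Nat.add_mul_div_right _ _ (by omega : 0 < ℓ + 1)] at h2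
          exact tsub_le_iff_right.2 (h2.trans_eq (Nat.add_comm _ _))
      _ = C := hC.symm
  -- assemble
  have hgoodcard : ((Finset.Ico 1 T).filter good).card +
      ((Finset.Ico 1 T).filter (fun j => ¬ good j)).card = T - 1 := by
    rw [Finset.card_filter_add_card_filter_not, Nat.card_Ico]
  have hexp : T - 2 * C ≤ ((Finset.Ico 1 T).filter good).card + 1 := by omega
  have h1 : f u ≤ q * ballMax G f u (1 * (ℓ + 1)) := by
    have := hsub.1 u huR
    calc f u ≤ q * ballMax G f u (ℓ + 1) := this
      _ ≤ q * ballMax G f u (1 * (ℓ + 1)) := by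
          apply mul_le_mul_of_nonneg_left (hM_mono (by omega)) hq0.le
  have h2 := key (T - 1) 1 (by omega) le_rfl
  calc f u ≤ q * ballMax G f u (1 * (ℓ + 1)) := h1
    _ ≤ q * (q ^ ((Finset.Ico 1 T).filter good).card * Msup) :=
        mul_le_mul_of_nonneg_left h2 hq0.le
    _ = q ^ (((Finset.Ico 1 T).filter good).card + 1) * Msup := by ring
    _ ≤ q ^ (T - 2 * C) * Msup := by
        apply mul_le_mul_of_nonneg_right _ hMsup0
        exact pow_le_pow_of_le_one hq0.le hq1.le hexp
end
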